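/- Let q = 3^m and let d be a positive integer. The monomial f(x) = x^d satisfies: for every y ∈ F_q the map x ↦ (f(x+y) - f(y))/x on F_q* is 2-to-1, if and only if both (i) gcd(d - 1, q - 1) = 2 and (ii) the map g_d(y) = (y^d - 1)/(y - 1) restricted to F_q \ {1} is 2-to-1. -/

import Mathlib

open Finset
open scoped Classical

lemma torsion_card {F : Type*} [Field F] [Fintype F] (n : ℕ) :
    (univ.filter fun x : F => x ≠ 0 ∧ x ^ n = 1).card = Nat.gcd n (Fintype.card F - 1) := by
  classical
  set N := Fintype.card F - 1 with hNdef
  have hcardu : Nat.card Fˣ = N := by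
    rw [hNdef, Nat.card_units, Nat.card_eq_fintype_card]
  have hN : 0 < N := by rw [← hcardu]; exact Nat.card_pos
  set g := Nat.gcd n N with hgdef
  have hgN : g ∣ N := Nat.gcd_dvd_right n N
  have hg : 0 < g := Nat.gcd_pos_of_pos_right n hN
  -- find primitive g-th root of unity
  obtain ⟨ζu, hζu⟩ := IsCyclic.exists_ofOrder_eq_natCard (α := Fˣ)
  rw [hcardu] at hζu
  have hord : orderOf (ζu ^ (N / g)) = g := by
    rw [orderOf_pow, hζu, Nat.gcd_eq_right (Nat.div_dvd_of_dvd hgN),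
      Nat.div_div_self hgN hN.ne']
  have hprim : IsPrimitiveRoot ((ζu ^ (N / g) : Fˣ) : F) g := by
    have h := IsPrimitiveRoot.coe_units_iff.mpr (IsPrimitiveRoot.orderOf (ζu ^ (N / g)))
    rwa [hord] at h
  have hset : (univ.filter fun x : F => x ≠ 0 ∧ x ^ n = 1)
      = Polynomial.nthRootsFinset g (1 : F) := by
    ext x
    simp only [mem_filter, mem_univ, true_and, Polynomial.mem_nthRootsFinset hg (1 : F)]
    constructor
    · rintro ⟨hx0, hxn⟩
      have h1 : orderOf x ∣ n := orderOf_dvd_of_pow_eq_one hxn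
      have h2 : orderOf x ∣ N := orderOf_dvd_of_pow_eq_one
        (FiniteField.pow_card_sub_one_eq_one x hx0)
      exact orderOf_dvd_iff_pow_eq_one.mp (Nat.dvd_gcd h1 h2)
    · intro hxg
      have hx0 : x ≠ 0 := by
        intro h; rw [h, zero_pow hg.ne'] at hxg; exact zero_ne_one hxg
      obtain ⟨k, hk⟩ := Nat.gcd_dvd_left n N
      exact ⟨hx0, by rw [hk, pow_mul, hxg, one_pow]⟩
    
  rw [hset, hprim.card_nthRootsFinset]

lemma fiber_card {F : Type*} [Field F] [Fintype F] (n : ℕ) {z x0 : F}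
    (hx0 : x0 ≠ 0) (hz : x0 ^ n = z) :
    (univ.filter fun x : F => x ≠ 0 ∧ x ^ n = z).card
      = (univ.filter fun x : F => x ≠ 0 ∧ x ^ n = 1).card := by
  classical
  have hz0 : z ≠ 0 := hz ▸ pow_ne_zero n hx0
  apply Finset.card_bij (fun x _ => x / x0)
  · intro x hx
    simp only [mem_filter, mem_univ, true_and] at hx ⊢
    exact ⟨div_ne_zero hx.1 hx0, by rw [div_pow, hx.2, hz, div_self hz0]⟩
  · intro a ha b hb hab
    rw [div_eq_mul_inv, div_eq_mul_inv] at hab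
    exact mul_right_cancel₀ (inv_ne_zero hx0) hab
  · intro u hu
    simp only [mem_filter, mem_univ, true_and] at hu
    refine ⟨u * x0, ?_, by rw [mul_div_cancel_right₀ _ hx0]⟩
    simp only [mem_filter, mem_univ, true_and]
    exact ⟨mul_ne_zero hu.1 hx0, by rw [mul_pow, hu.2, one_mul, hz]⟩

lemma exists_iff_card {F : Type*} [Fintype F] (p : F → Prop) [DecidablePred p] :
    (∃ x, p x) ↔ (univ.filter p).card ≠ 0 := by
  simp [Finset.card_eq_zero, Finset.filter_eq_empty_iff]

lemma pow_two_to_one_iff {F : Type*} [Field F] [Fintype F] (n : ℕ) :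
    (∀ z : F, (∃ x : F, x ≠ 0 ∧ x ^ n = z) →
      (univ.filter fun x : F => x ≠ 0 ∧ x ^ n = z).card = 2)
    ↔ Nat.gcd n (Fintype.card F - 1) = 2 := by
  constructor
  · intro h
    have h1 := h 1 ⟨1, one_ne_zero, one_pow n⟩
    rwa [fiber_card n one_ne_zero (one_pow n), torsion_card n] at h1
  · rintro hg z ⟨x, hx0, hxz⟩
    rw [fiber_card n hx0 hxz, torsion_card n, hg]

-- substitution: for y ≠ 0, the difference-quotient fiber matches a g_d fiber
lemma sub_heq {F : Type*} [Field F] (d : ℕ) (hd : 0 < d) {y x : F} (hy : y ≠ 0) (hx : x ≠ 0) :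
    (((x + y) / y) ^ d - 1) / ((x + y) / y - 1)
      = (((x + y) ^ d - y ^ d) / x) / y ^ (d - 1) := by
  have hu1 : (x + y) / y - 1 = x / y := by field_simp; ring
  have hyd : y ^ d = y ^ (d - 1) * y := by
    rw [← pow_succ]; congr 1; omega
  rw [hu1, div_pow]
  field_simp
  rw [hyd]
  ring

lemma div_right_cancel₀' {F : Type*} [Field F] {c : F} (hc : c ≠ 0) {a b : F}
    (h : a / c = b / c) : a = b := by
  rw [div_eq_mul_inv, div_eq_mul_inv] at h
  exact mul_right_cancel₀ (inv_ne_zero hc) h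

lemma sub_card {F : Type*} [Field F] [Fintype F] (d : ℕ) (hd : 0 < d) {y : F} (hy : y ≠ 0)
    (z : F) :
    (univ.filter fun x : F => x ≠ 0 ∧ ((x + y) ^ d - y ^ d) / x = z).card
      = (univ.filter fun u : F => u ≠ 1 ∧ (u ^ d - 1) / (u - 1) = z / y ^ (d - 1)).card := by
  classical
  have hc : y ^ (d - 1) ≠ 0 := pow_ne_zero _ hy
  apply Finset.card_bij (fun x _ => (x + y) / y)
  · intro x hx
    simp only [mem_filter, mem_univ, true_and] at hx ⊢
    obtain ⟨hx0, hxz⟩ := hx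
    refine ⟨?_, ?_⟩
    · have : (x + y) / y - 1 = x / y := by field_simp; ring
      intro h1
      rw [h1, sub_self] at this
      exact hx0 (by field_simp at this; simpa using this.symm)
    · rw [sub_heq d hd hy hx0, hxz]
  · intro a ha b hb hab
    have h2 := div_right_cancel₀' hy hab
    exact add_right_cancel h2
  · intro u hu
    simp only [mem_filter, mem_univ, true_and] at hu
    obtain ⟨hu1, huz⟩ := hu
    have hx0 : y * (u - 1) ≠ 0 := mul_ne_zero hy (sub_ne_zero.mpr hu1)
    have hxy : (y * (u - 1) + y) / y = u := by field_simp; ring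
    refine ⟨y * (u - 1), ?_, hxy⟩
    simp only [mem_filter, mem_univ, true_and]
    refine ⟨hx0, ?_⟩
    have := sub_heq d hd (y := y) (x := y * (u - 1)) hy hx0
    rw [hxy, huz] at this
    exact div_right_cancel₀' hc this.symm

theorem stmt19 {F : Type*} [Field F] [Fintype F] (m : ℕ)
    (hq : Fintype.card F = 3 ^ m) (d : ℕ) (hd : 0 < d) :
    (∀ y : F, ∀ z : F,
      (∃ x : F, x ≠ 0 ∧ ((x + y) ^ d - y ^ d) / x = z) →
      (Finset.univ.filter (fun x : F =>
        x ≠ 0 ∧ ((x + y) ^ d - y ^ d) / x = z)).card = 2) ↔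
    (Nat.gcd (d - 1) (Fintype.card F - 1) = 2 ∧
      ∀ z : F,
        (∃ y : F, y ≠ 1 ∧ (y ^ d - 1) / (y - 1) = z) →
        (Finset.univ.filter (fun y : F =>
          y ≠ 1 ∧ (y ^ d - 1) / (y - 1) = z)).card = 2) := by
  classical
  -- y = 0 fiber rewriting
  have hpt : ∀ x : F, x ≠ 0 → ((x + 0) ^ d - 0 ^ d) / x = x ^ (d - 1) := by
    intro x hx
    rw [add_zero, zero_pow hd.ne', sub_zero,
      show x ^ d = x ^ (d - 1) * x by rw [← pow_succ]; congr 1; omega,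
      mul_div_cancel_right₀ _ hx]
  have h0filter : ∀ z : F,
      (univ.filter fun x : F => x ≠ 0 ∧ ((x + 0) ^ d - 0 ^ d) / x = z)
        = (univ.filter fun x : F => x ≠ 0 ∧ x ^ (d - 1) = z) := by
    intro z
    apply Finset.filter_congr
    intro x _
    constructor
    · rintro ⟨hx, he⟩; exact ⟨hx, by rw [← hpt x hx]; exact he⟩
    · rintro ⟨hx, he⟩; exact ⟨hx, by rw [hpt x hx]; exact he⟩
  constructor
  · intro h
    constructor
    · apply (pow_two_to_one_iff (d - 1)).mp
      intro z hz
      obtain ⟨x, hx0, hxz⟩ := hz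
      have := h 0 z ⟨x, hx0, by rw [hpt x hx0]; exact hxz⟩
      rwa [h0filter z] at this
    · intro z hz
      have key : (univ.filter fun x : F =>
            x ≠ 0 ∧ ((x + 1) ^ d - 1 ^ d) / x = z).card
          = (univ.filter fun u : F => u ≠ 1 ∧ (u ^ d - 1) / (u - 1) = z).card := by
        have := sub_card (F := F) d hd (y := 1) one_ne_zero z
        simpa [one_pow, div_one] using this
      rw [← key]
      apply h 1 z
      rw [exists_iff_card] at hz ⊢
      rwa [key]
  · rintro ⟨hgcd, hg⟩ y z hex
    by_cases hy : y = 0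
    · subst hy
      rw [h0filter z]
      apply (pow_two_to_one_iff (d - 1)).mpr hgcd z
      rw [exists_iff_card] at hex ⊢
      rwa [← h0filter z]
    · rw [sub_card d hd hy z]
      apply hg
      rw [exists_iff_card] at hex ⊢
      rwa [← sub_card d hd hy z]
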